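/- arXiv:0902.4587 — 6 statements merged into one kernel-verified Lean document; each statement's English description precedes it below -/
import Mathlib

section
/- If A and B are matrices with nontrivial kernels (rank-deficient), then spark(A ⊗ B) ≤ min{spark(A), spark(B)}. -/
open Classical Kronecker

/-- Number of nonzero entries of a vector. -/
noncomputable def sparsity {n : Type*} (x : n → ℝ) : ℕ := Set.ncard {i | x i ≠ 0}

/-- The spark of a matrix: the minimal number of nonzero entries of a nonzero kernel
vector; if the kernel is trivial we use the convention `spark A = (number of columns) + 1`. -/
noncomputable def spark {m n : Type*} [Fintype m] [Fintype n] (A : Matrix m n ℝ) : ℕ :=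
  if ∃ x : n → ℝ, x ≠ 0 ∧ A.mulVec x = 0 then
    sInf {k | ∃ x : n → ℝ, x ≠ 0 ∧ A.mulVec x = 0 ∧ sparsity x = k}
  else Fintype.card n + 1

/-- Mutual incoherence: the largest absolute inner product of two distinct columns. -/
noncomputable def mutInc {m n : Type*} [Fintype m] (A : Matrix m n ℝ) : ℝ :=
  sSup {v | ∃ i j, i ≠ j ∧ v = |∑ k, A k i * A k j|}

/-- Off-diagonal mutual incoherence of two matrices. -/
noncomputable def mutIncOD {m n : Type*} [Fintype m] (A B : Matrix m n ℝ) : ℝ :=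
  sSup {v | ∃ i j, i ≠ j ∧ v = |∑ k, A k i * B k j|}

/-- Diagonal mutual incoherence of two matrices. -/
noncomputable def mutIncD {m n : Type*} [Fintype m] (A B : Matrix m n ℝ) : ℝ :=
  sSup {v | ∃ i, v = |∑ k, A k i * B k i|}

/-- Mutual incoherence of a matrix whose columns are renormalized. -/
noncomputable def mutIncN {m n : Type*} [Fintype m] (C : Matrix m n ℝ) : ℝ :=
  sSup {v | ∃ i j, i ≠ j ∧
    v = |∑ k, C k i * C k j| /
        (Real.sqrt (∑ k, (C k i) ^ 2) * Real.sqrt (∑ k, (C k j) ^ 2))}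

/-- The `k`-restricted isometry constant of a matrix. -/
noncomputable def ripConst {m n : Type*} [Fintype m] [Fintype n] (k : ℕ)
    (A : Matrix m n ℝ) : ℝ :=
  sInf {δ | 0 ≤ δ ∧ ∀ x : n → ℝ, sparsity x ≤ k →
    (1 - δ) * ∑ i, (x i) ^ 2 ≤ ∑ i, (A.mulVec x i) ^ 2 ∧
    ∑ i, (A.mulVec x i) ^ 2 ≤ (1 + δ) * ∑ i, (x i) ^ 2}

/-- Iterated Kronecker product of a family of matrices (up to the standard
reindexing of the row/column index sets). -/
noncomputable def kronFamily {N : ℕ} {m n : Fin N → ℕ}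
    (A : ∀ i, Matrix (Fin (m i)) (Fin (n i)) ℝ) :
    Matrix (∀ i, Fin (m i)) (∀ i, Fin (n i)) ℝ :=
  fun r c => ∏ i, A i (r i) (c i)


lemma spark_le_sparsity {m n : Type*} [Fintype m] [Fintype n] (M : Matrix m n ℝ)
    {x : n → ℝ} (hx : x ≠ 0) (hMx : M.mulVec x = 0) : spark M ≤ sparsity x := by
  rw [spark, if_pos ⟨x, hx, hMx⟩]
  exact Nat.sInf_le ⟨x, hx, hMx, rfl⟩

lemma spark_attained {m n : Type*} [Fintype m] [Fintype n] (M : Matrix m n ℝ)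
    (h : ∃ x : n → ℝ, x ≠ 0 ∧ M.mulVec x = 0) :
    ∃ x : n → ℝ, x ≠ 0 ∧ M.mulVec x = 0 ∧ sparsity x = spark M := by
  rw [spark, if_pos h]
  obtain ⟨x, hx, hMx⟩ := h
  have hm := Nat.sInf_mem (s := {k | ∃ x : n → ℝ, x ≠ 0 ∧ M.mulVec x = 0 ∧ sparsity x = k})
    ⟨sparsity x, x, hx, hMx, rfl⟩
  exact hm

lemma spark_kron_le_left {p q r s : ℕ} (A : Matrix (Fin p) (Fin q) ℝ)
    (B : Matrix (Fin r) (Fin s) ℝ)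
    {x : Fin q → ℝ} (hx : x ≠ 0) (hAx : A.mulVec x = 0) (j0 : Fin s) :
    spark (A ⊗ₖ B) ≤ sparsity x := by
  set z : Fin q × Fin s → ℝ := fun c => if c.2 = j0 then x c.1 else 0 with hz
  obtain ⟨i0, hi0⟩ := Function.ne_iff.mp hx
  have hzne : z ≠ 0 := by
    intro h
    apply hi0
    have := congrFun h (i0, j0)
    simpa [hz] using this
  have hker : (A ⊗ₖ B).mulVec z = 0 := by
    funext kl
    obtain ⟨k, l⟩ := kl
    have : (A ⊗ₖ B).mulVec z (k, l) =
        (∑ i, A k i * x i) * B l j0 := by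
      simp only [Matrix.mulVec, dotProduct, Fintype.sum_prod_type,
        Matrix.kroneckerMap_apply, hz]
      rw [Finset.sum_mul]
      refine Finset.sum_congr rfl fun i _ => ?_
      rw [Finset.sum_eq_single j0] <;> simp +contextual [mul_comm, mul_left_comm]
    rw [Pi.zero_apply, this]
    have : A.mulVec x k = 0 := by rw [hAx]; rfl
    simp only [Matrix.mulVec, dotProduct] at this
    rw [this, zero_mul]
  have hsp : sparsity z = sparsity x := by
    unfold sparsity
    have : {c : Fin q × Fin s | z c ≠ 0} = (fun i => (i, j0)) '' {i | x i ≠ 0} := by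
      ext ⟨i, j⟩
      simp only [Set.mem_setOf_eq, Set.mem_image, hz]
      constructor
      · intro h
        by_cases hj : j = j0
        · subst hj; exact ⟨i, by simpa using h, rfl⟩
        · simp [hj] at h
      · rintro ⟨i', hi', heq⟩
        obtain ⟨rfl, rfl⟩ := Prod.mk.injEq .. ▸ heq
        simpa using hi'
    rw [this, Set.ncard_image_of_injective _ (fun a b hab => (Prod.mk.injEq .. ▸ hab).1)]
  calc spark (A ⊗ₖ B) ≤ sparsity z := spark_le_sparsity _ hzne hker
    _ = sparsity x := hsp

lemma spark_kron_le_right {p q r s : ℕ} (A : Matrix (Fin p) (Fin q) ℝ)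
    (B : Matrix (Fin r) (Fin s) ℝ)
    {y : Fin s → ℝ} (hy : y ≠ 0) (hBy : B.mulVec y = 0) (i0 : Fin q) :
    spark (A ⊗ₖ B) ≤ sparsity y := by
  set z : Fin q × Fin s → ℝ := fun c => if c.1 = i0 then y c.2 else 0 with hz
  obtain ⟨j0, hj0⟩ := Function.ne_iff.mp hy
  have hzne : z ≠ 0 := by
    intro h
    apply hj0
    have := congrFun h (i0, j0)
    simpa [hz] using this
  have hker : (A ⊗ₖ B).mulVec z = 0 := by
    funext kl
    obtain ⟨k, l⟩ := kl
    have : (A ⊗ₖ B).mulVec z (k, l) =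
        A k i0 * (∑ j, B l j * y j) := by
      simp only [Matrix.mulVec, dotProduct, Fintype.sum_prod_type,
        Matrix.kroneckerMap_apply, hz]
      rw [Finset.mul_sum]
      rw [Finset.sum_eq_single i0] <;>
        simp +contextual [Finset.mul_sum, mul_comm, mul_left_comm]
    rw [Pi.zero_apply, this]
    have : B.mulVec y l = 0 := by rw [hBy]; rfl
    simp only [Matrix.mulVec, dotProduct] at this
    rw [this, mul_zero]
  have hsp : sparsity z = sparsity y := by
    unfold sparsity
    have : {c : Fin q × Fin s | z c ≠ 0} = (fun j => (i0, j)) '' {j | y j ≠ 0} := by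
      ext ⟨i, j⟩
      simp only [Set.mem_setOf_eq, Set.mem_image, hz]
      constructor
      · intro h
        by_cases hi : i = i0
        · subst hi; exact ⟨j, by simpa using h, rfl⟩
        · simp [hi] at h
      · rintro ⟨j', hj', heq⟩
        obtain ⟨rfl, rfl⟩ := Prod.mk.injEq .. ▸ heq
        simpa using hj'
    rw [this, Set.ncard_image_of_injective _ (fun a b hab => (Prod.mk.injEq .. ▸ hab).2)]
  calc spark (A ⊗ₖ B) ≤ sparsity z := spark_le_sparsity _ hzne hker
    _ = sparsity y := hsp

theorem stmt3 {p q r s : ℕ} (A : Matrix (Fin p) (Fin q) ℝ)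
    (B : Matrix (Fin r) (Fin s) ℝ)
    (hA : ∃ x : Fin q → ℝ, x ≠ 0 ∧ A.mulVec x = 0)
    (hB : ∃ x : Fin s → ℝ, x ≠ 0 ∧ B.mulVec x = 0) :
    spark (A ⊗ₖ B) ≤ min (spark A) (spark B) := by
  obtain ⟨x, hx, hAx, hxs⟩ := spark_attained A hA
  obtain ⟨y, hy, hBy, hys⟩ := spark_attained B hB
  obtain ⟨j0, -⟩ := Function.ne_iff.mp hy
  obtain ⟨i0, -⟩ := Function.ne_iff.mp hx
  refine le_min ?_ ?_
  · exact hxs ▸ spark_kron_le_left A B hx hAx j0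
  · exact hys ▸ spark_kron_le_right A B hy hBy i0
end

section
/- If A ∈ ℝ^{m×n} (m ≤ n) has unit-norm columns and full row rank m, then its mutual incoherence satisfies M(A) ≥ √((n − m)/(m(n − 1))). -/
open Classical Kronecker

theorem stmt8 {m n : ℕ} (hmn : m ≤ n) (A : Matrix (Fin m) (Fin n) ℝ)
    (hcols : ∀ j, ∑ k, (A k j) ^ 2 = 1) (hrank : A.rank = m) :
    Real.sqrt (((n : ℝ) - m) / (m * ((n : ℝ) - 1))) ≤ mutInc A := by
  set T : Set ℝ := {v | ∃ i j, i ≠ j ∧ v = |∑ k : Fin m, A k i * A k j|} with hT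
  have hTim : T = (fun p : Fin n × Fin n => |∑ k, A k p.1 * A k p.2|) '' {p | p.1 ≠ p.2} := by
    ext v
    constructor
    · rintro ⟨i, j, hij, rfl⟩; exact ⟨(i, j), hij, rfl⟩
    · rintro ⟨⟨i, j⟩, hij, rfl⟩; exact ⟨i, j, hij, rfl⟩
  have hTbdd : BddAbove T := by
    rw [hTim]; exact ((Set.toFinite _).image _).bddAbove
  rcases lt_or_ge n 2 with hn | hn
  · -- n = 0 or n = 1 : the set T is empty and the LHS is 0
    have hTe : T = ∅ := by
      ext v; simp only [Set.mem_setOf_eq, Set.mem_empty_iff_false, iff_false]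
      rintro ⟨i, j, hij, -⟩
      omega
    have hmut : mutInc A = 0 := by
      show sSup T = 0
      rw [hTe, Real.sSup_empty]
    have hmeq : m = n := by
      by_contra h
      have hm0 : m = 0 := by omega
      have hn1 : n = 1 := by omega
      subst hm0; subst hn1
      simpa using hcols 0
    rw [hmut, hmeq, sub_self, zero_div, Real.sqrt_zero]
  -- main case : n ≥ 2
  have hm1 : 1 ≤ m := by
    by_contra h
    have hm0 : m = 0 := by omega
    have := hcols ⟨0, by omega⟩
    subst hm0
    simpa using this
  set M := mutInc A with hM
  have hMub : ∀ i j : Fin n, i ≠ j → |∑ k, A k i * A k j| ≤ M :=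
    fun i j hij => le_csSup hTbdd ⟨i, j, hij, rfl⟩
  have hM0 : 0 ≤ M := by
    have h01 : (⟨0, by omega⟩ : Fin n) ≠ ⟨1, by omega⟩ := by
      simp [Fin.ext_iff]
    exact le_trans (abs_nonneg _) (hMub _ _ h01)
  -- the swap identity
  have swap : ∑ k : Fin m, ∑ l : Fin m, (∑ j, A k j * A l j)^2
      = ∑ i : Fin n, ∑ j : Fin n, (∑ k, A k i * A k j)^2 := by
    have hL : ∑ k : Fin m, ∑ l : Fin m, (∑ j, A k j * A l j)^2
        = ∑ p : Fin m × Fin m, ∑ q : Fin n × Fin n,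
            (A p.1 q.1 * A p.2 q.1) * (A p.1 q.2 * A p.2 q.2) := by
      rw [Fintype.sum_prod_type]
      exact Finset.sum_congr rfl fun k _ => Finset.sum_congr rfl fun l _ => by
        rw [sq, Finset.sum_mul_sum, Fintype.sum_prod_type]
    have hR : ∑ i : Fin n, ∑ j : Fin n, (∑ k, A k i * A k j)^2
        = ∑ q : Fin n × Fin n, ∑ p : Fin m × Fin m,
            (A p.1 q.1 * A p.1 q.2) * (A p.2 q.1 * A p.2 q.2) := by
      rw [Fintype.sum_prod_type]
      exact Finset.sum_congr rfl fun i _ => Finset.sum_congr rfl fun j _ => by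
        rw [sq, Finset.sum_mul_sum, Fintype.sum_prod_type]
    rw [hL, hR, Finset.sum_comm]
    exact Finset.sum_congr rfl fun q _ => Finset.sum_congr rfl fun p _ => by ring
  -- trace of A * Aᵀ equals n
  have htr : ∑ k : Fin m, (∑ j, A k j * A k j) = (n : ℝ) := by
    rw [Finset.sum_comm]
    have : ∀ j : Fin n, ∑ k : Fin m, A k j * A k j = 1 := by
      intro j
      rw [← hcols j]
      exact Finset.sum_congr rfl fun k _ => (sq (A k j)).symm
    simp [this]
  -- Cauchy–Schwarz : n² ≤ m * tr((AAᵀ)²)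
  have hCS : (n : ℝ)^2 ≤ (m : ℝ) * ∑ k : Fin m, ∑ l : Fin m, (∑ j, A k j * A l j)^2 := by
    have h1 : (∑ k : Fin m, (∑ j, A k j * A k j))^2
        ≤ (m : ℝ) * ∑ k : Fin m, (∑ j, A k j * A k j)^2 := by
      simpa using sq_sum_le_card_mul_sum_sq (s := Finset.univ)
        (f := fun k : Fin m => ∑ j, A k j * A k j)
    have h2 : ∑ k : Fin m, (∑ j, A k j * A k j)^2
        ≤ ∑ k : Fin m, ∑ l : Fin m, (∑ j, A k j * A l j)^2 :=
      Finset.sum_le_sum fun k _ =>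
        Finset.single_le_sum (f := fun l => (∑ j, A k j * A l j)^2)
          (fun l _ => sq_nonneg _) (Finset.mem_univ k)
    calc (n : ℝ)^2 = (∑ k : Fin m, (∑ j, A k j * A k j))^2 := by rw [htr]
      _ ≤ (m : ℝ) * ∑ k : Fin m, (∑ j, A k j * A k j)^2 := h1
      _ ≤ (m : ℝ) * ∑ k : Fin m, ∑ l : Fin m, (∑ j, A k j * A l j)^2 :=
          mul_le_mul_of_nonneg_left h2 (by positivity)
  -- split the Gram Frobenius norm into diagonal + off-diagonal
  set S : ℝ := ∑ i : Fin n, ∑ j ∈ Finset.univ.erase i, (∑ k, A k i * A k j)^2 with hS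
  have hsplit : ∑ i : Fin n, ∑ j : Fin n, (∑ k, A k i * A k j)^2 = S + n := by
    have h1 : ∀ i : Fin n,
        ∑ j : Fin n, (∑ k, A k i * A k j)^2
          = (∑ j ∈ Finset.univ.erase i, (∑ k, A k i * A k j)^2) + 1 := by
      intro i
      rw [← Finset.sum_erase_add _ _ (Finset.mem_univ i)]
      congr 1
      have : ∑ k, A k i * A k i = 1 := by
        rw [← hcols i]; exact Finset.sum_congr rfl fun k _ => (sq (A k i)).symm
      rw [this]; norm_num
    calc ∑ i : Fin n, ∑ j : Fin n, (∑ k, A k i * A k j)^2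
        = ∑ i : Fin n, ((∑ j ∈ Finset.univ.erase i, (∑ k, A k i * A k j)^2) + 1) :=
          Finset.sum_congr rfl fun i _ => h1 i
      _ = S + n := by
          rw [Finset.sum_add_distrib, ← hS]
          simp
  -- off-diagonal bound
  have hSle : S ≤ (n : ℝ) * ((n : ℝ) - 1) * M^2 := by
    have hterm : ∀ i : Fin n, ∀ j ∈ Finset.univ.erase i, (∑ k, A k i * A k j)^2 ≤ M^2 := by
      intro i j hj
      have hij : j ≠ i := Finset.ne_of_mem_erase hj
      have := hMub i j (Ne.symm hij)
      calc (∑ k, A k i * A k j)^2 = |∑ k, A k i * A k j|^2 := (sq_abs _).symm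
        _ ≤ M^2 := by nlinarith [abs_nonneg (∑ k, A k i * A k j)]
    calc S ≤ ∑ i : Fin n, ∑ _j ∈ Finset.univ.erase i, M^2 :=
          Finset.sum_le_sum fun i _ => Finset.sum_le_sum (hterm i)
      _ = ∑ _i : Fin n, ((n : ℝ) - 1) * M^2 := by
          refine Finset.sum_congr rfl fun i _ => ?_
          rw [Finset.sum_const, Finset.card_erase_of_mem (Finset.mem_univ i),
            Finset.card_univ, Fintype.card_fin, nsmul_eq_mul,
            Nat.cast_sub (by omega : 1 ≤ n)]
          norm_num
      _ = (n : ℝ) * ((n : ℝ) - 1) * M^2 := by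
          rw [Finset.sum_const, Finset.card_univ, Fintype.card_fin, nsmul_eq_mul]
          ring
  -- final algebra
  have hn2 : (2 : ℝ) ≤ n := by exact_mod_cast hn
  have hm1' : (1 : ℝ) ≤ m := by exact_mod_cast hm1
  have hkey : (n : ℝ)^2 ≤ (m : ℝ) * (S + n) := by
    calc (n : ℝ)^2 ≤ (m : ℝ) * ∑ k : Fin m, ∑ l : Fin m, (∑ j, A k j * A l j)^2 := hCS
      _ = (m : ℝ) * (S + n) := by rw [swap, hsplit]
  have hM2 : ((n : ℝ) - m) / ((m : ℝ) * ((n : ℝ) - 1)) ≤ M^2 := by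
    rw [div_le_iff₀ (by nlinarith)]
    nlinarith [hkey, hSle, hM0, mul_le_mul_of_nonneg_left hSle (by positivity : (0:ℝ) ≤ m)]
  calc Real.sqrt (((n : ℝ) - m) / (m * ((n : ℝ) - 1)))
      ≤ Real.sqrt (M^2) := Real.sqrt_le_sqrt hM2
    _ = M := Real.sqrt_sq hM0
end

section
/- For matrices A and B with unit-norm columns, the mutual incoherence of their Kronecker product satisfies M(A ⊗ B) = max{M(A), M(B)}. -/
open Classical Kronecker

noncomputable section StmtAux

def incSet {m n : Type*} [Fintype m] (A : Matrix m n ℝ) : Set ℝ :=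
  {v | ∃ i j, i ≠ j ∧ v = |∑ k, A k i * A k j|}

lemma mutInc_eq_sSup {m n : Type*} [Fintype m] (A : Matrix m n ℝ) :
    mutInc A = sSup (incSet A) := rfl

lemma incSet_bdd {m n : Type*} [Fintype m] [Fintype n] (A : Matrix m n ℝ) :
    BddAbove (incSet A) := by
  apply Set.Finite.bddAbove
  apply Set.Finite.subset (Set.finite_range fun p : n × n => |∑ k, A k p.1 * A k p.2|)
  rintro v ⟨i, j, -, rfl⟩
  exact ⟨(i, j), rfl⟩

lemma abs_inner_le_one {m n : Type*} [Fintype m] (A : Matrix m n ℝ)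
    (hA : ∀ j, ∑ k, (A k j) ^ 2 = 1) (i j : n) : |∑ k, A k i * A k j| ≤ 1 := by
  have h2 : (∑ k, A k i * A k j) ^ 2 ≤ 1 := by
    calc (∑ k, A k i * A k j) ^ 2 ≤ (∑ k, (A k i) ^ 2) * (∑ k, (A k j) ^ 2) :=
          Finset.sum_mul_sq_le_sq_mul_sq _ _ _
      _ = 1 := by rw [hA, hA, one_mul]
  calc |∑ k, A k i * A k j| = Real.sqrt ((∑ k, A k i * A k j) ^ 2) :=
        (Real.sqrt_sq_eq_abs _).symm
    _ ≤ Real.sqrt 1 := Real.sqrt_le_sqrt h2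
    _ = 1 := Real.sqrt_one

open Kronecker in
lemma kron_col_inner {m₁ n₁ m₂ n₂ : ℕ} (A : Matrix (Fin m₁) (Fin n₁) ℝ)
    (B : Matrix (Fin m₂) (Fin n₂) ℝ) (p r : Fin n₁) (q s : Fin n₂) :
    ∑ k : Fin m₁ × Fin m₂, (A ⊗ₖ B) k (p, q) * (A ⊗ₖ B) k (r, s)
      = (∑ k, A k p * A k r) * (∑ k, B k q * B k s) := by
  rw [Finset.sum_mul_sum, Fintype.sum_prod_type]
  refine Finset.sum_congr rfl fun a _ => Finset.sum_congr rfl fun b _ => ?_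
  simp [Matrix.kroneckerMap_apply]
  ring

end StmtAux

theorem stmt10 {m₁ n₁ m₂ n₂ : ℕ} (hn₁ : 2 ≤ n₁) (hn₂ : 2 ≤ n₂)
    (A : Matrix (Fin m₁) (Fin n₁) ℝ) (B : Matrix (Fin m₂) (Fin n₂) ℝ)
    (hA : ∀ j, ∑ k, (A k j) ^ 2 = 1) (hB : ∀ j, ∑ k, (B k j) ^ 2 = 1) :
    mutInc (A ⊗ₖ B) = max (mutInc A) (mutInc B) := by
  classical
  have hB1 : ∀ q, ∑ k, B k q * B k q = 1 := fun q => by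
    rw [← hB q]; exact Finset.sum_congr rfl fun k _ => (sq (B k q)).symm
  have hA1 : ∀ p, ∑ k, A k p * A k p = 1 := fun p => by
    rw [← hA p]; exact Finset.sum_congr rfl fun k _ => (sq (A k p)).symm
  obtain ⟨iA, jA, hijA⟩ : ∃ i j : Fin n₁, i ≠ j :=
    ⟨⟨0, by omega⟩, ⟨1, by omega⟩, by simp [Fin.ext_iff]⟩
  obtain ⟨iB, jB, hijB⟩ : ∃ i j : Fin n₂, i ≠ j :=
    ⟨⟨0, by omega⟩, ⟨1, by omega⟩, by simp [Fin.ext_iff]⟩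
  have hMA0 : 0 ≤ mutInc A :=
    le_trans (abs_nonneg _) (le_csSup (incSet_bdd A) ⟨iA, jA, hijA, rfl⟩)
  have hMB0 : 0 ≤ mutInc B :=
    le_trans (abs_nonneg _) (le_csSup (incSet_bdd B) ⟨iB, jB, hijB, rfl⟩)
  apply le_antisymm
  · rw [mutInc_eq_sSup]
    apply Real.sSup_le
    · rintro v ⟨⟨p, q⟩, ⟨r, s⟩, hne, rfl⟩
      rw [kron_col_inner, abs_mul]
      by_cases hpr : p = r
      · subst hpr
        have hqs : q ≠ s := by
          intro h; exact hne (by rw [h])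
        calc |∑ k, A k p * A k p| * |∑ k, B k q * B k s|
            ≤ 1 * |∑ k, B k q * B k s| :=
              mul_le_mul_of_nonneg_right (abs_inner_le_one A hA p p) (abs_nonneg _)
          _ = |∑ k, B k q * B k s| := one_mul _
          _ ≤ mutInc B := le_csSup (incSet_bdd B) ⟨q, s, hqs, rfl⟩
          _ ≤ max (mutInc A) (mutInc B) := le_max_right _ _
      · calc |∑ k, A k p * A k r| * |∑ k, B k q * B k s|
            ≤ |∑ k, A k p * A k r| * 1 :=
              mul_le_mul_of_nonneg_left (abs_inner_le_one B hB q s) (abs_nonneg _)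
          _ = |∑ k, A k p * A k r| := mul_one _
          _ ≤ mutInc A := le_csSup (incSet_bdd A) ⟨p, r, hpr, rfl⟩
          _ ≤ max (mutInc A) (mutInc B) := le_max_left _ _
    · exact le_trans hMA0 (le_max_left _ _)
  · have hK0 : 0 ≤ mutInc (A ⊗ₖ B) := by
      refine le_trans (abs_nonneg _)
        (le_csSup (incSet_bdd (A ⊗ₖ B)) ⟨(iA, iB), (jA, jB), ?_, rfl⟩)
      intro h; exact hijA (congrArg Prod.fst h)
    apply max_le
    · rw [mutInc_eq_sSup A]
      apply Real.sSup_le _ hK0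
      rintro v ⟨i, j, hij, rfl⟩
      have hval : |∑ k, A k i * A k j|
          = |∑ k : Fin m₁ × Fin m₂, (A ⊗ₖ B) k (i, iB) * (A ⊗ₖ B) k (j, iB)| := by
        rw [kron_col_inner, hB1, mul_one]
      rw [hval]
      exact le_csSup (incSet_bdd _)
        ⟨(i, iB), (j, iB), fun h => hij (congrArg Prod.fst h), rfl⟩
    · rw [mutInc_eq_sSup B]
      apply Real.sSup_le _ hK0
      rintro v ⟨i, j, hij, rfl⟩
      have hval : |∑ k, B k i * B k j|
          = |∑ k : Fin m₁ × Fin m₂, (A ⊗ₖ B) k (iA, i) * (A ⊗ₖ B) k (iA, j)| := by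
        rw [kron_col_inner, hA1, one_mul]
      rw [hval]
      exact le_csSup (incSet_bdd _)
        ⟨(iA, i), (iA, j), fun h => hij (congrArg Prod.snd h), rfl⟩
end

section
/- For a matrix A with unit-norm columns, the 2-restricted isometry constant equals the mutual incoherence: δ₂(A) = M(A). -/
open Classical Kronecker

lemma key {m n : ℕ} (A : Matrix (Fin m) (Fin n) ℝ)
    (hcols : ∀ j, ∑ k, (A k j) ^ 2 = 1) {i j : Fin n} (hij : i ≠ j)
    (x : Fin n → ℝ) (hx : ∀ l, l ≠ i → l ≠ j → x l = 0) :
    (∑ l, (x l) ^ 2 = x i ^ 2 + x j ^ 2) ∧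
    (∑ k, (A.mulVec x k) ^ 2 =
      x i ^ 2 + x j ^ 2 + 2 * x i * x j * ∑ k, A k i * A k j) := by
  have hsub : ∀ (f : Fin n → ℝ), (∀ l, x l = 0 → f l = 0) →
      ∑ l, f l = f i + f j := by
    intro f hf
    rw [← Finset.sum_pair hij]
    refine (Finset.sum_subset (Finset.subset_univ _) ?_).symm
    intro l _ hl
    simp only [Finset.mem_insert, Finset.mem_singleton, not_or] at hl
    exact hf l (hx l hl.1 hl.2)
  constructor
  · exact hsub (fun l => x l ^ 2) (fun l h => by simp [h])
  · have hmv : ∀ k, A.mulVec x k = A k i * x i + A k j * x j := by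
      intro k
      show ∑ l, A k l * x l = _
      exact hsub (fun l => A k l * x l) (fun l h => by simp [h])
    simp only [hmv]
    have he : ∀ k, (A k i * x i + A k j * x j)^2 =
        x i^2 * (A k i)^2 + x j^2 * (A k j)^2 + (2 * x i * x j) * (A k i * A k j) := by
      intro k; ring
    simp only [he]
    rw [Finset.sum_add_distrib, Finset.sum_add_distrib, ← Finset.mul_sum, ← Finset.mul_sum,
      ← Finset.mul_sum, hcols i, hcols j]
    ring

theorem stmt15 {m n : ℕ} (hn : 2 ≤ n) (A : Matrix (Fin m) (Fin n) ℝ)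
    (hcols : ∀ j, ∑ k, (A k j) ^ 2 = 1) :
    ripConst 2 A = mutInc A := by
  set g : Fin n → Fin n → ℝ := fun i j => ∑ k, A k i * A k j with hg
  set V : Set ℝ := {v | ∃ i j, i ≠ j ∧ v = |∑ k, A k i * A k j|} with hV
  -- V is finite
  have hVfin : V.Finite := by
    have : V ⊆ (fun p : Fin n × Fin n => |g p.1 p.2|) '' Set.univ := by
      rintro v ⟨i, j, hij, rfl⟩
      exact ⟨(i, j), trivial, rfl⟩
    exact Set.Finite.subset (Set.Finite.image _ (Set.finite_univ)) this
  have hi0 : (⟨0, by omega⟩ : Fin n) ≠ ⟨1, by omega⟩ := by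
    intro h; simpa using congrArg Fin.val h
  have hVne : V.Nonempty := ⟨_, ⟨_, _, hi0, rfl⟩⟩
  have hle : ∀ i j, i ≠ j → |g i j| ≤ mutInc A := fun i j hij =>
    le_csSup hVfin.bddAbove ⟨i, j, hij, rfl⟩
  have hM0 : 0 ≤ mutInc A := (abs_nonneg _).trans (hle _ _ hi0)
  -- membership of mutInc A in the RIP set
  have hmem : (mutInc A) ∈ {δ : ℝ | 0 ≤ δ ∧ ∀ x : Fin n → ℝ, sparsity x ≤ 2 →
      (1 - δ) * ∑ i, (x i) ^ 2 ≤ ∑ i, (A.mulVec x i) ^ 2 ∧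
      ∑ i, (A.mulVec x i) ^ 2 ≤ (1 + δ) * ∑ i, (x i) ^ 2} := by
    refine ⟨hM0, fun x hx => ?_⟩
    -- extract i ≠ j containing the support
    have hsfin : {l | x l ≠ 0}.Finite := Set.toFinite _
    have hcard : hsfin.toFinset.card ≤ 2 := by
      rw [← Set.ncard_eq_toFinset_card _ hsfin]; exact hx
    obtain ⟨t, hst, htcard⟩ := Finset.exists_superset_card_eq hcard (by simpa using hn)
    obtain ⟨i, j, hij, rfl⟩ := Finset.card_eq_two.mp htcard
    have hsupp : ∀ l, l ≠ i → l ≠ j → x l = 0 := by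
      intro l hli hlj
      by_contra h
      have : l ∈ ({i, j} : Finset (Fin n)) := hst (by simpa using h)
      simp only [Finset.mem_insert, Finset.mem_singleton] at this
      tauto
    obtain ⟨h1, h2⟩ := key A hcols hij x hsupp
    rw [h1, h2]
    have hgle := hle i j hij
    have hgu : g i j ≤ mutInc A := (abs_le.mp hgle).2
    have hgl : -(mutInc A) ≤ g i j := (abs_le.mp hgle).1
    constructor
    · nlinarith [sq_nonneg (x i + x j), sq_nonneg (x i - x j),
        mul_nonneg (sub_nonneg.mpr hgu) (sq_nonneg (x i + x j)),
        mul_nonneg (by linarith : (0:ℝ) ≤ mutInc A + g i j) (sq_nonneg (x i - x j))]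
    · nlinarith [sq_nonneg (x i + x j), sq_nonneg (x i - x j),
        mul_nonneg (sub_nonneg.mpr hgu) (sq_nonneg (x i + x j)),
        mul_nonneg (by linarith : (0:ℝ) ≤ mutInc A + g i j) (sq_nonneg (x i - x j))]
  have hbdd : BddBelow {δ : ℝ | 0 ≤ δ ∧ ∀ x : Fin n → ℝ, sparsity x ≤ 2 →
      (1 - δ) * ∑ i, (x i) ^ 2 ≤ ∑ i, (A.mulVec x i) ^ 2 ∧
      ∑ i, (A.mulVec x i) ^ 2 ≤ (1 + δ) * ∑ i, (x i) ^ 2} :=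
    ⟨0, fun δ hδ => hδ.1⟩
  refine le_antisymm (csInf_le hbdd hmem) ?_
  refine le_csInf ⟨_, hmem⟩ ?_
  rintro δ ⟨hδ0, hδ⟩
  refine csSup_le hVne ?_
  rintro v ⟨i, j, hij, rfl⟩
  -- test vectors e_i ± e_j
  have test : ∀ s : ℝ, s = 1 ∨ s = -1 →
      (1 - δ) * 2 ≤ 2 + 2 * s * g i j ∧ 2 + 2 * s * g i j ≤ (1 + δ) * 2 := by
    intro s hs
    set x : Fin n → ℝ := fun l => if l = i then 1 else if l = j then s else 0 with hxdef
    have hsupp : ∀ l, l ≠ i → l ≠ j → x l = 0 := by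
      intro l hli hlj; simp [hxdef, hli, hlj]
    have hxi : x i = 1 := by simp [hxdef]
    have hxj : x j = s := by simp [hxdef, hij.symm]
    have hsp : sparsity x ≤ 2 := by
      have hsub : {l | x l ≠ 0} ⊆ {i, j} := by
        intro l hl
        by_contra h
        simp only [Set.mem_insert_iff, Set.mem_singleton_iff, not_or] at h
        exact hl (hsupp l h.1 h.2)
      calc Set.ncard {l | x l ≠ 0} ≤ Set.ncard ({i, j} : Set (Fin n)) :=
            Set.ncard_le_ncard hsub (Set.toFinite _)
        _ = 2 := Set.ncard_pair hij
    obtain ⟨h1, h2⟩ := key A hcols hij x hsupp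
    obtain ⟨hb1, hb2⟩ := hδ x hsp
    rw [h1, h2] at hb1 hb2
    have hs2 : (1:ℝ) ^ 2 + s ^ 2 = 2 := by rcases hs with h | h <;> rw [h] <;> norm_num
    rw [hxi, hxj] at hb1 hb2
    rw [hs2] at hb1 hb2
    simp only [hg]
    constructor <;> [linarith [hb1]; linarith [hb2]]
  have t1 := test 1 (Or.inl rfl)
  have t2 := test (-1) (Or.inr rfl)
  rw [abs_le]
  constructor <;> [linarith [t2.2]; linarith [t1.2]]
end

section
/- Let A = [a₁,…,a_n], B = [b₁,…,b_n] ∈ ℝ^{m×n} have unit-norm columns and suppose M_D(A,B) ≠ 1. Then the mutual incoherence of the (column-renormalized) sum satisfies M(A + B) ≤ (M(A) + 2·M_OD(A,B) + M(B)) / (2(1 − M_D(A,B))). -/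
open Classical Kronecker

private lemma bddAbove_pair {n : ℕ} (f : Fin n → Fin n → ℝ) :
    BddAbove {v : ℝ | ∃ i j, i ≠ j ∧ v = f i j} := by
  apply BddAbove.mono _ (Set.finite_range fun p : Fin n × Fin n => f p.1 p.2).bddAbove
  rintro v ⟨i, j, _, rfl⟩
  exact ⟨(i, j), rfl⟩

private lemma bddAbove_diag {n : ℕ} (f : Fin n → ℝ) :
    BddAbove {v : ℝ | ∃ i, v = f i} := by
  apply BddAbove.mono _ (Set.finite_range f).bddAbove
  rintro v ⟨i, rfl⟩
  exact ⟨i, rfl⟩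

theorem stmt17 {m n : ℕ} (A B : Matrix (Fin m) (Fin n) ℝ)
    (hA : ∀ j, ∑ k, (A k j) ^ 2 = 1) (hB : ∀ j, ∑ k, (B k j) ^ 2 = 1)
    (hD : mutIncD A B ≠ 1) :
    mutIncN (A + B) ≤
      (mutInc A + 2 * mutIncOD A B + mutInc B) / (2 * (1 - mutIncD A B)) := by
  have habs : ∀ i, |∑ k, A k i * B k i| ≤ 1 := by
    intro i
    have h := Finset.sum_mul_sq_le_sq_mul_sq Finset.univ (fun k => A k i) (fun k => B k i)
    rw [hA, hB] at h
    nlinarith [abs_nonneg (∑ k, A k i * B k i), sq_abs (∑ k, A k i * B k i)]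
  have hD1 : mutIncD A B ≤ 1 := by
    apply Real.sSup_le _ zero_le_one
    rintro v ⟨i, rfl⟩; exact habs i
  have hDlt : mutIncD A B < 1 := lt_of_le_of_ne hD1 hD
  have hdenpos : 0 < 2 * (1 - mutIncD A B) := by linarith
  have hODnn : 0 ≤ mutIncOD A B :=
    Real.sSup_nonneg (by rintro v ⟨i, j, _, rfl⟩; exact abs_nonneg _)
  have hAnn : 0 ≤ mutInc A :=
    Real.sSup_nonneg (by rintro v ⟨i, j, _, rfl⟩; exact abs_nonneg _)
  have hBnn : 0 ≤ mutInc B :=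
    Real.sSup_nonneg (by rintro v ⟨i, j, _, rfl⟩; exact abs_nonneg _)
  have hnum : 0 ≤ mutInc A + 2 * mutIncOD A B + mutInc B := by linarith
  apply Real.sSup_le _ (div_nonneg hnum hdenpos.le)
  rintro v ⟨i, j, hij, rfl⟩
  have hdi : |∑ k, A k i * B k i| ≤ mutIncD A B :=
    le_csSup (bddAbove_diag fun i => |∑ k, A k i * B k i|) ⟨i, rfl⟩
  have hdj : |∑ k, A k j * B k j| ≤ mutIncD A B :=
    le_csSup (bddAbove_diag fun i => |∑ k, A k i * B k i|) ⟨j, rfl⟩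
  -- norm of columns of A + B
  have hnorm : ∀ l, ∑ k, ((A + B) k l) ^ 2 = 2 + 2 * ∑ k, A k l * B k l := by
    intro l
    have h1 : ∀ k, ((A + B) k l) ^ 2 = A k l ^ 2 + B k l ^ 2 + 2 * (A k l * B k l) := by
      intro k; simp [Matrix.add_apply]; ring
    rw [Finset.sum_congr rfl fun k _ => h1 k, Finset.sum_add_distrib, Finset.sum_add_distrib,
      hA, hB, ← Finset.mul_sum]
    ring
  -- cross term
  have hcross : ∑ k, (A + B) k i * (A + B) k j =
      (∑ k, A k i * A k j) + (∑ k, A k i * B k j) + (∑ k, B k i * A k j)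
        + ∑ k, B k i * B k j := by
    rw [← Finset.sum_add_distrib, ← Finset.sum_add_distrib, ← Finset.sum_add_distrib]
    apply Finset.sum_congr rfl
    intro k _; simp [Matrix.add_apply]; ring
  have h1 : |∑ k, A k i * A k j| ≤ mutInc A :=
    le_csSup (bddAbove_pair fun i j => |∑ k, A k i * A k j|) ⟨i, j, hij, rfl⟩
  have h2 : |∑ k, A k i * B k j| ≤ mutIncOD A B :=
    le_csSup (bddAbove_pair fun i j => |∑ k, A k i * B k j|) ⟨i, j, hij, rfl⟩
  have h3 : |∑ k, B k i * A k j| ≤ mutIncOD A B := by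
    rw [show (∑ k, B k i * A k j) = ∑ k, A k j * B k i from
      Finset.sum_congr rfl fun k _ => mul_comm _ _]
    exact le_csSup (bddAbove_pair fun i j => |∑ k, A k i * B k j|) ⟨j, i, hij.symm, rfl⟩
  have h4 : |∑ k, B k i * B k j| ≤ mutInc B :=
    le_csSup (bddAbove_pair fun i j => |∑ k, B k i * B k j|) ⟨i, j, hij, rfl⟩
  have hnumle : |∑ k, (A + B) k i * (A + B) k j|
      ≤ mutInc A + 2 * mutIncOD A B + mutInc B := by
    rw [hcross]
    set x := ∑ k, A k i * A k j
    set y := ∑ k, A k i * B k j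
    set z := ∑ k, B k i * A k j
    set w := ∑ k, B k i * B k j
    calc |x + y + z + w| ≤ |x + y + z| + |w| := abs_add_le _ _
      _ ≤ |x + y| + |z| + |w| := by linarith [abs_add_le (x + y) z]
      _ ≤ |x| + |y| + |z| + |w| := by linarith [abs_add_le x y]
      _ ≤ mutInc A + 2 * mutIncOD A B + mutInc B := by linarith
  -- denominators
  have hsq : ∀ l, |∑ k, A k l * B k l| ≤ mutIncD A B →
      Real.sqrt (2 - 2 * mutIncD A B) ≤ Real.sqrt (∑ k, ((A + B) k l) ^ 2) := by
    intro l hl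
    apply Real.sqrt_le_sqrt
    rw [hnorm l]
    have := neg_abs_le (∑ k, A k l * B k l)
    linarith
  have hprod : 2 * (1 - mutIncD A B) ≤
      Real.sqrt (∑ k, ((A + B) k i) ^ 2) * Real.sqrt (∑ k, ((A + B) k j) ^ 2) := by
    have he : 2 * (1 - mutIncD A B)
        = Real.sqrt (2 - 2 * mutIncD A B) * Real.sqrt (2 - 2 * mutIncD A B) := by
      rw [Real.mul_self_sqrt (by linarith)]; ring
    rw [he]
    exact mul_le_mul (hsq i hdi) (hsq j hdj) (Real.sqrt_nonneg _) (Real.sqrt_nonneg _)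
  exact div_le_div₀ hnum hnumle hdenpos hprod
end

section
/- Let A¹, …, A^M ∈ ℝ^{m×n} have unit-norm columns and suppose M − 2·Σ_{1≤i<j≤M} M_D(Aⁱ, Aʲ) > 0. Then M(Σ_{i=1}^M Aⁱ) ≤ (Σ_{i=1}^M M(Aⁱ) + 2·Σ_{1≤i<j≤M} M_OD(Aⁱ, Aʲ)) / (M − 2·Σ_{1≤i<j≤M} M_D(Aⁱ, Aʲ)). -/
open Classical Kronecker

private lemma bdd_aux {ι : Type*} [Finite ι] {s : Set ℝ} (f : ι → ℝ)
    (h : s ⊆ Set.range f) : BddAbove s :=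
  ((Set.finite_range f).subset h).bddAbove

private lemma le_mutIncD' {m n : Type*} [Fintype m] [Finite n] (A B : Matrix m n ℝ) (i : n) :
    |∑ k, A k i * B k i| ≤ sSup {v | ∃ i, v = |∑ k, A k i * B k i|} := by
  apply le_csSup
  · exact bdd_aux (fun i : n => |∑ k, A k i * B k i|) (by rintro v ⟨i, rfl⟩; exact ⟨i, rfl⟩)
  · exact ⟨i, rfl⟩

private lemma le_mutIncOD' {m n : Type*} [Fintype m] [Finite n] (A B : Matrix m n ℝ)
    (i j : n) (hij : i ≠ j) :
    |∑ k, A k i * B k j| ≤ sSup {v | ∃ i j, i ≠ j ∧ v = |∑ k, A k i * B k j|} := by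
  apply le_csSup
  · exact bdd_aux (fun p : n × n => |∑ k, A k p.1 * B k p.2|)
      (by rintro v ⟨i, j, _, rfl⟩; exact ⟨(i, j), rfl⟩)
  · exact ⟨i, j, hij, rfl⟩

private lemma sSup_nonneg_abs {s : Set ℝ} (h : ∀ v ∈ s, ∃ w : ℝ, v = |w|) : 0 ≤ sSup s :=
  Real.sSup_nonneg (by rintro v hv; obtain ⟨w, rfl⟩ := h v hv; positivity)

private lemma sum_split {M : ℕ} (g : Fin M × Fin M → ℝ) :
    ∑ p : Fin M × Fin M, g p
      = (∑ i, g (i, i))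
        + ((∑ p ∈ Finset.univ.filter (fun p : Fin M × Fin M => p.1 < p.2), g p)
        + ∑ p ∈ Finset.univ.filter (fun p : Fin M × Fin M => p.1 < p.2), g p.swap) := by
  have h1 := Finset.sum_filter_add_sum_filter_not Finset.univ
    (fun p : Fin M × Fin M => p.1 = p.2) g
  have h2 := Finset.sum_filter_add_sum_filter_not
    (Finset.univ.filter (fun p : Fin M × Fin M => ¬ p.1 = p.2))
    (fun p : Fin M × Fin M => p.1 < p.2) g
  rw [Finset.filter_filter, Finset.filter_filter] at h2
  have e1 : Finset.filter (fun p : Fin M × Fin M => ¬ p.1 = p.2 ∧ p.1 < p.2) Finset.univ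
      = Finset.filter (fun p : Fin M × Fin M => p.1 < p.2) Finset.univ := by
    apply Finset.filter_congr; intro p _; constructor
    · exact fun h => h.2
    · exact fun h => ⟨ne_of_lt h, h⟩
  have e2 : Finset.filter (fun p : Fin M × Fin M => ¬ p.1 = p.2 ∧ ¬ p.1 < p.2) Finset.univ
      = Finset.filter (fun p : Fin M × Fin M => p.2 < p.1) Finset.univ := by
    apply Finset.filter_congr; intro p _; constructor
    · rintro ⟨h1, h2⟩; omega
    · intro h; omega
  rw [e1, e2] at h2
  have e3 : ∑ p ∈ Finset.univ.filter (fun p : Fin M × Fin M => p.2 < p.1), g p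
      = ∑ p ∈ Finset.univ.filter (fun p : Fin M × Fin M => p.1 < p.2), g p.swap := by
    apply Finset.sum_nbij' (fun p => p.swap) (fun p => p.swap) <;> simp
  have e4 : ∑ p ∈ Finset.univ.filter (fun p : Fin M × Fin M => p.1 = p.2), g p
      = ∑ i, g (i, i) := by
    refine Finset.sum_nbij' (fun p => p.1) (fun i => (i, i)) ?_ ?_ ?_ ?_ ?_
    · simp
    · simp
    · intro p hp; simp only [Finset.mem_filter] at hp; exact Prod.ext rfl hp.2
    · intro i _; rfl
    · intro p hp; simp only [Finset.mem_filter] at hp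
      exact congrArg g (Prod.ext rfl hp.2.symm)
  rw [← h1, e4, ← h2, e3]

private lemma expand_sum {m n M : ℕ} (A : Fin M → Matrix (Fin m) (Fin n) ℝ) (c d : Fin n) :
    ∑ k, (∑ i, A i) k c * (∑ i, A i) k d
      = ∑ p : Fin M × Fin M, ∑ k, A p.1 k c * A p.2 k d := by
  simp only [Matrix.sum_apply, Finset.sum_mul_sum, Fintype.sum_prod_type]
  rw [Finset.sum_comm]
  congr 1; ext i
  rw [Finset.sum_comm]



theorem stmt19 {m n M : ℕ} (A : Fin M → Matrix (Fin m) (Fin n) ℝ)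
    (hA : ∀ i j, ∑ k, (A i k j) ^ 2 = 1)
    (hpos : 0 < (M : ℝ) - 2 * ∑ p ∈ Finset.univ.filter
        (fun p : Fin M × Fin M => p.1 < p.2), mutIncD (A p.1) (A p.2)) :
    mutIncN (∑ i, A i) ≤
      ((∑ i, mutInc (A i)) + 2 * ∑ p ∈ Finset.univ.filter
          (fun p : Fin M × Fin M => p.1 < p.2), mutIncOD (A p.1) (A p.2)) /
      ((M : ℝ) - 2 * ∑ p ∈ Finset.univ.filter
          (fun p : Fin M × Fin M => p.1 < p.2), mutIncD (A p.1) (A p.2)) := by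
  set den : ℝ := (M : ℝ) - 2 * ∑ p ∈ Finset.univ.filter
      (fun p : Fin M × Fin M => p.1 < p.2), mutIncD (A p.1) (A p.2) with hden_def
  set num : ℝ := (∑ i, mutInc (A i)) + 2 * ∑ p ∈ Finset.univ.filter
      (fun p : Fin M × Fin M => p.1 < p.2), mutIncOD (A p.1) (A p.2) with hnum_def
  -- nonnegativity of num
  have hnum0 : 0 ≤ num := by
    apply add_nonneg
    · exact Finset.sum_nonneg fun i _ =>
        sSup_nonneg_abs (by rintro v ⟨i, j, _, rfl⟩; exact ⟨_, rfl⟩)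
    · exact mul_nonneg (by norm_num) (Finset.sum_nonneg fun p _ =>
        sSup_nonneg_abs (by rintro v ⟨i, j, _, rfl⟩; exact ⟨_, rfl⟩))
  -- norm lower bound
  have hden : ∀ c : Fin n, den ≤ ∑ k, ((∑ i, A i) k c) ^ 2 := by
    intro c
    have e : ∑ k, ((∑ i, A i) k c) ^ 2
        = ∑ p : Fin M × Fin M, ∑ k, A p.1 k c * A p.2 k c := by
      rw [← expand_sum A c c]; congr 1; ext k; ring
    rw [e, sum_split (fun p => ∑ k, A p.1 k c * A p.2 k c)]
    have hdiag : ∑ i : Fin M, ∑ k, A i k c * A i k c = (M : ℝ) := by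
      have h1 : ∀ i : Fin M, ∑ k, A i k c * A i k c = 1 := by
        intro i; rw [← hA i c]; apply Finset.sum_congr rfl; intro k _; ring
      simp [h1]
    have comb : (∑ p ∈ Finset.univ.filter (fun p : Fin M × Fin M => p.1 < p.2),
          ∑ k, A p.1 k c * A p.2 k c)
        + (∑ p ∈ Finset.univ.filter (fun p : Fin M × Fin M => p.1 < p.2),
          ∑ k, A p.swap.1 k c * A p.swap.2 k c)
        = ∑ p ∈ Finset.univ.filter (fun p : Fin M × Fin M => p.1 < p.2),
          2 * ∑ k, A p.1 k c * A p.2 k c := by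
      rw [← Finset.sum_add_distrib]
      apply Finset.sum_congr rfl; intro p _
      simp only [Prod.fst_swap, Prod.snd_swap]
      rw [two_mul]; congr 1
      apply Finset.sum_congr rfl; intro k _; ring
    have hoff : -(2 * ∑ p ∈ Finset.univ.filter
          (fun p : Fin M × Fin M => p.1 < p.2), mutIncD (A p.1) (A p.2))
        ≤ ∑ p ∈ Finset.univ.filter (fun p : Fin M × Fin M => p.1 < p.2),
            2 * ∑ k, A p.1 k c * A p.2 k c := by
      rw [Finset.mul_sum, ← Finset.sum_neg_distrib]
      apply Finset.sum_le_sum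
      intro p _
      have h1 : |∑ k, A p.1 k c * A p.2 k c| ≤ mutIncD (A p.1) (A p.2) :=
        le_mutIncD' (A p.1) (A p.2) c
      have h2 := neg_abs_le (∑ k, A p.1 k c * A p.2 k c)
      linarith
    simp only [hdiag]
    rw [hden_def]
    linarith [comb, hoff]
  -- numerator bound
  have hnum : ∀ c d : Fin n, c ≠ d →
      |∑ k, (∑ i, A i) k c * (∑ i, A i) k d| ≤ num := by
    intro c d hcd
    rw [expand_sum A c d, sum_split (fun p => ∑ k, A p.1 k c * A p.2 k d)]
    have t1 : |∑ i : Fin M, ∑ k, A i k c * A i k d| ≤ ∑ i, mutInc (A i) := by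
      refine (Finset.abs_sum_le_sum_abs _ _).trans (Finset.sum_le_sum fun i _ => ?_)
      exact le_mutIncOD' (A i) (A i) c d hcd
    have t2 : |∑ p ∈ Finset.univ.filter (fun p : Fin M × Fin M => p.1 < p.2),
          ∑ k, A p.1 k c * A p.2 k d|
        ≤ ∑ p ∈ Finset.univ.filter (fun p : Fin M × Fin M => p.1 < p.2),
          mutIncOD (A p.1) (A p.2) := by
      refine (Finset.abs_sum_le_sum_abs _ _).trans (Finset.sum_le_sum fun p _ => ?_)
      exact le_mutIncOD' (A p.1) (A p.2) c d hcd
    have t3 : |∑ p ∈ Finset.univ.filter (fun p : Fin M × Fin M => p.1 < p.2),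
          ∑ k, A p.swap.1 k c * A p.swap.2 k d|
        ≤ ∑ p ∈ Finset.univ.filter (fun p : Fin M × Fin M => p.1 < p.2),
          mutIncOD (A p.1) (A p.2) := by
      refine (Finset.abs_sum_le_sum_abs _ _).trans (Finset.sum_le_sum fun p _ => ?_)
      simp only [Prod.fst_swap, Prod.snd_swap]
      have e : ∑ k, A p.2 k c * A p.1 k d = ∑ k, A p.1 k d * A p.2 k c := by
        apply Finset.sum_congr rfl; intro k _; ring
      rw [e]
      exact le_mutIncOD' (A p.1) (A p.2) d c hcd.symm
    calc |(∑ i : Fin M, ∑ k, A i k c * A i k d)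
          + ((∑ p ∈ Finset.univ.filter (fun p : Fin M × Fin M => p.1 < p.2),
              ∑ k, A p.1 k c * A p.2 k d)
            + ∑ p ∈ Finset.univ.filter (fun p : Fin M × Fin M => p.1 < p.2),
              ∑ k, A p.swap.1 k c * A p.swap.2 k d)|
        ≤ |∑ i : Fin M, ∑ k, A i k c * A i k d|
          + (|∑ p ∈ Finset.univ.filter (fun p : Fin M × Fin M => p.1 < p.2),
              ∑ k, A p.1 k c * A p.2 k d|
            + |∑ p ∈ Finset.univ.filter (fun p : Fin M × Fin M => p.1 < p.2),
              ∑ k, A p.swap.1 k c * A p.swap.2 k d|) := by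
          exact (abs_add_le _ _).trans (by gcongr; exact abs_add_le _ _)
      _ ≤ num := by rw [hnum_def]; linarith
  -- conclude
  apply Real.sSup_le _ (div_nonneg hnum0 hpos.le)
  rintro v ⟨c, d, hcd, rfl⟩
  apply div_le_div₀ hnum0 (hnum c d hcd) hpos
  calc den = Real.sqrt den * Real.sqrt den := (Real.mul_self_sqrt hpos.le).symm
    _ ≤ Real.sqrt (∑ k, ((∑ i, A i) k c) ^ 2) * Real.sqrt (∑ k, ((∑ i, A i) k d) ^ 2) := by
        apply mul_le_mul (Real.sqrt_le_sqrt (hden c)) (Real.sqrt_le_sqrt (hden d))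
          (Real.sqrt_nonneg _) (Real.sqrt_nonneg _)
end
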